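/- For every ε > 0 and d ∈ ℕ there exists K̃ > 0, depending only on ε and d, such that for every set E ⊆ [0,1]^d, the sum of λ(Q) over all dyadic cubes Q ⊆ [0,1]^d satisfying 3Q ∩ E ≠ ∅ and sparse(E,7Q) ≥ ε is at most K̃. -/

import Mathlib

open Metric MeasureTheory
open scoped Classical ENNReal

noncomputable section

/-- The closed unit cube `[0,1]^d` in Euclidean space. -/
def unitCube (d : ℕ) : Set (EuclideanSpace ℝ (Fin d)) := {x | ∀ i, 0 ≤ x i ∧ x i ≤ 1}

/-- The dyadic cube `Q = Π_i [a_i·2^{-k}, (a_i+1)·2^{-k})`. -/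
def dyCube (d k : ℕ) (a : Fin d → ℕ) : Set (EuclideanSpace ℝ (Fin d)) :=
  {x | ∀ i, (a i : ℝ) * 2 ^ (-(k : ℤ)) ≤ x i ∧ x i < ((a i : ℝ) + 1) * 2 ^ (-(k : ℤ))}

/-- The tripled dyadic cube `3Q = Π_i [(a_i-1)·2^{-k}, (a_i+2)·2^{-k})`. -/
def dyCube3 (d k : ℕ) (a : Fin d → ℕ) : Set (EuclideanSpace ℝ (Fin d)) :=
  {x | ∀ i, ((a i : ℝ) - 1) * 2 ^ (-(k : ℤ)) ≤ x i ∧ x i < ((a i : ℝ) + 2) * 2 ^ (-(k : ℤ))}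

/-- The septupled dyadic cube `7Q = Π_i [(a_i-3)·2^{-k}, (a_i+4)·2^{-k})`. -/
def dyCube7 (d k : ℕ) (a : Fin d → ℕ) : Set (EuclideanSpace ℝ (Fin d)) :=
  {x | ∀ i, ((a i : ℝ) - 3) * 2 ^ (-(k : ℤ)) ≤ x i ∧ x i < ((a i : ℝ) + 4) * 2 ^ (-(k : ℤ))}

/-- `sparse(E, 7Q) = sup { dist(x, 7Q ∩ E) : x ∈ 7Q } / side(7Q)` with `side(7Q) = 7·2^{-k}`. -/
def sparse7 {d : ℕ} (E : Set (EuclideanSpace ℝ (Fin d))) (k : ℕ) (a : Fin d → ℕ) : ℝ :=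
  (⨆ x : (dyCube7 d k a),
    Metric.infDist (x : EuclideanSpace ℝ (Fin d)) (dyCube7 d k a ∩ E)) / (7 * 2 ^ (-(k : ℤ)))


namespace CPS

/-- floor commutes with division by a positive natural -/
lemma floor_div_nat' (r : ℝ) (n : ℕ) (hn : 0 < n) : ⌊r / n⌋ = ⌊r⌋ / (n : ℤ) := by
  have hn' : (0:ℝ) < n := by exact_mod_cast hn
  have hnz : (0:ℤ) < (n:ℤ) := by exact_mod_cast hn
  have hmod := Int.mul_ediv_add_emod ⌊r⌋ (n:ℤ)
  have h0 : 0 ≤ ⌊r⌋ % (n:ℤ) := Int.emod_nonneg _ (ne_of_gt hnz)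
  have h1 : ⌊r⌋ % (n:ℤ) < n := Int.emod_lt_of_pos _ hnz
  have hfl : (⌊r⌋ : ℝ) ≤ r := Int.floor_le r
  have hfu : r < ⌊r⌋ + 1 := Int.lt_floor_add_one r
  have hmodR : (n:ℝ) * ((⌊r⌋ / (n:ℤ) : ℤ) : ℝ) + ((⌊r⌋ % (n:ℤ) : ℤ) : ℝ) = (⌊r⌋ : ℝ) := by
    exact_mod_cast congrArg (fun z : ℤ => (z : ℝ)) hmod
  have h0R : (0:ℝ) ≤ ((⌊r⌋ % (n:ℤ) : ℤ) : ℝ) := by exact_mod_cast h0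
  have h1R : ((⌊r⌋ % (n:ℤ) : ℤ) : ℝ) < n := by exact_mod_cast h1
  rw [Int.floor_eq_iff]
  constructor
  · rw [le_div_iff₀ hn']
    nlinarith
  · rw [div_lt_iff₀ hn']
    have h2R : ((⌊r⌋ % (n:ℤ) : ℤ) : ℝ) + 1 ≤ n := by exact_mod_cast h1
    push_cast
    nlinarith


lemma floor_scale (r : ℝ) (ℓ n : ℕ) : ⌊r * 2 ^ ℓ⌋ = ⌊r * 2 ^ (ℓ + n)⌋ / ((2:ℤ) ^ n) := by
  have h : r * 2 ^ ℓ = (r * 2 ^ (ℓ + n)) / ((2:ℕ) ^ n : ℕ) := by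
    push_cast
    rw [pow_add]
    field_simp
  rw [h, floor_div_nat' _ _ (by positivity)]
  push_cast
  rfl

/-- The dyadic cube at level `j` with integer corner `b`. -/
def cube (d j : ℕ) (b : Fin d → ℤ) : Set (EuclideanSpace ℝ (Fin d)) :=
  {x | ∀ i, ⌊x i * 2 ^ j⌋ = b i}

lemma mem_cube_iff {d j : ℕ} {b : Fin d → ℤ} {x : EuclideanSpace ℝ (Fin d)} :
    x ∈ cube d j b ↔ ∀ i, (b i : ℝ) ≤ x i * 2 ^ j ∧ x i * 2 ^ j < (b i : ℝ) + 1 := by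
  unfold cube
  simp only [Set.mem_setOf_eq]
  exact forall_congr' fun i => Int.floor_eq_iff

def pt (d j : ℕ) (b : Fin d → ℤ) : EuclideanSpace ℝ (Fin d) :=
  WithLp.toLp 2 (fun i => (b i : ℝ) * ((2:ℝ) ^ j)⁻¹)

lemma pt_mul (d j : ℕ) (b : Fin d → ℤ) (i : Fin d) : pt d j b i * 2 ^ j = (b i : ℝ) := by
  unfold pt
  rw [PiLp.toLp_apply]
  field_simp

lemma pt_mem (d j : ℕ) (b : Fin d → ℤ) : pt d j b ∈ cube d j b := by
  intro i
  rw [pt_mul]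
  exact Int.floor_intCast _

/-- nesting: if `x` and `z` are in the same level-`j` cube then they are in the same
level-`ℓ` cube for all `ℓ ≤ j`. -/
lemma floor_eq_of_le {ℓ j : ℕ} (h : ℓ ≤ j) {x z : ℝ} (hxz : ⌊x * 2 ^ j⌋ = ⌊z * 2 ^ j⌋) :
    ⌊x * 2 ^ ℓ⌋ = ⌊z * 2 ^ ℓ⌋ := by
  obtain ⟨n, rfl⟩ := Nat.exists_eq_add_of_le h
  rw [floor_scale x ℓ n, floor_scale z ℓ n, hxz]


def anc (d ℓ j : ℕ) (b : Fin d → ℤ) : Fin d → ℤ := fun i => ⌊pt d j b i * 2 ^ ℓ⌋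

lemma anc_self (d j : ℕ) (b : Fin d → ℤ) : anc d j j b = b := by
  funext i
  unfold anc
  rw [pt_mul]
  exact Int.floor_intCast _

lemma pt_mem_anc (d : ℕ) {ℓ j : ℕ} (h : ℓ ≤ j) (b : Fin d → ℤ) :
    pt d j b ∈ cube d ℓ (anc d ℓ j b) := fun i => rfl

lemma cube_subset_anc (d : ℕ) {ℓ j : ℕ} (h : ℓ ≤ j) (b : Fin d → ℤ) :
    cube d j b ⊆ cube d ℓ (anc d ℓ j b) := by
  intro x hx i
  exact floor_eq_of_le h ((hx i).trans ((pt_mem d j b) i).symm)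

lemma cube_subset_of_mem (d : ℕ) {ℓ j : ℕ} (h : ℓ ≤ j) {x : EuclideanSpace ℝ (Fin d)}
    {b c : Fin d → ℤ} (hx : x ∈ cube d j b) (hxc : x ∈ cube d ℓ c) :
    cube d j b ⊆ cube d ℓ c := by
  intro z hz i
  rw [← hxc i]
  exact floor_eq_of_le h ((hz i).trans (hx i).symm)

lemma stopSpec (d : ℕ) (E : Set (EuclideanSpace ℝ (Fin d))) (j : ℕ) (b : Fin d → ℤ) :
    ∃ ℓ : ℕ, ℓ = j ∨ cube d ℓ (anc d ℓ j b) ∩ E = ∅ := ⟨j, Or.inl rfl⟩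

def stopLevel (d : ℕ) (E : Set (EuclideanSpace ℝ (Fin d))) (j : ℕ) (b : Fin d → ℤ) : ℕ :=
  Nat.find (stopSpec d E j b)

def MH (d : ℕ) (E : Set (EuclideanSpace ℝ (Fin d))) (j : ℕ) (b : Fin d → ℤ) :
    ℕ × (Fin d → ℤ) :=
  (stopLevel d E j b, anc d (stopLevel d E j b) j b)

lemma stopLevel_le (d : ℕ) (E : Set (EuclideanSpace ℝ (Fin d))) (j : ℕ) (b : Fin d → ℤ) :
    stopLevel d E j b ≤ j := Nat.find_le (Or.inl rfl)

lemma stop_empty (d : ℕ) {E : Set (EuclideanSpace ℝ (Fin d))} {j : ℕ} {b : Fin d → ℤ}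
    (hhole : cube d j b ∩ E = ∅) :
    cube d (stopLevel d E j b) (anc d (stopLevel d E j b) j b) ∩ E = ∅ := by
  rcases Nat.find_spec (stopSpec d E j b) with h | h
  · rw [show stopLevel d E j b = j from h, anc_self]
    exact hhole
  · exact h

lemma stop_min (d : ℕ) (E : Set (EuclideanSpace ℝ (Fin d))) (j : ℕ) (b : Fin d → ℤ)
    {ℓ : ℕ} (hℓ : ℓ < stopLevel d E j b) : cube d ℓ (anc d ℓ j b) ∩ E ≠ ∅ := by
  have := Nat.find_min (stopSpec d E j b) hℓ
  tauto

lemma cube_subset_mh (d : ℕ) (E : Set (EuclideanSpace ℝ (Fin d))) (j : ℕ) (b : Fin d → ℤ) :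
    cube d j b ⊆ cube d (MH d E j b).1 (MH d E j b).2 :=
  cube_subset_anc d (stopLevel_le d E j b) b

lemma mh_disjoint_aux (d : ℕ) (E : Set (EuclideanSpace ℝ (Fin d)))
    {j₁ b₁ j₂ b₂} (h1 : cube d j₁ b₁ ∩ E = ∅) (h2 : cube d j₂ b₂ ∩ E = ∅)
    (hle : (MH d E j₁ b₁).1 ≤ (MH d E j₂ b₂).1) (hne : MH d E j₁ b₁ ≠ MH d E j₂ b₂) :
    cube d (MH d E j₁ b₁).1 (MH d E j₁ b₁).2 ∩ cube d (MH d E j₂ b₂).1 (MH d E j₂ b₂).2 = ∅ := by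
  by_contra hcon
  obtain ⟨x, hx1, hx2⟩ := Set.nonempty_iff_ne_empty.mpr hcon
  rcases eq_or_lt_of_le hle with heq | hlt
  · apply hne
    have hc : (MH d E j₁ b₁).2 = (MH d E j₂ b₂).2 := by
      funext i
      rw [← hx1 i, ← hx2 i, heq]
    exact Prod.ext heq hc
  · -- ℓ₁ < ℓ₂ = stopLevel of second
    have hsub : cube d (MH d E j₂ b₂).1 (MH d E j₂ b₂).2
        ⊆ cube d (MH d E j₁ b₁).1 (MH d E j₁ b₁).2 :=
      cube_subset_of_mem d (le_of_lt hlt) hx2 hx1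
    have hptmem : pt d j₂ b₂ ∈ cube d (MH d E j₁ b₁).1 (MH d E j₁ b₁).2 :=
      hsub (cube_subset_mh d E j₂ b₂ (pt_mem d j₂ b₂))
    have hancEq : anc d (MH d E j₁ b₁).1 j₂ b₂ = (MH d E j₁ b₁).2 := by
      funext i
      exact hptmem i
    have hE : cube d (MH d E j₁ b₁).1 (anc d (MH d E j₁ b₁).1 j₂ b₂) ∩ E = ∅ := by
      rw [hancEq]
      exact stop_empty d h1
    exact stop_min d E j₂ b₂ hlt hE

lemma mh_disjoint (d : ℕ) (E : Set (EuclideanSpace ℝ (Fin d)))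
    {j₁ b₁ j₂ b₂} (h1 : cube d j₁ b₁ ∩ E = ∅) (h2 : cube d j₂ b₂ ∩ E = ∅)
    (hne : MH d E j₁ b₁ ≠ MH d E j₂ b₂) :
    cube d (MH d E j₁ b₁).1 (MH d E j₁ b₁).2 ∩ cube d (MH d E j₂ b₂).1 (MH d E j₂ b₂).2 = ∅ := by
  rcases le_total (MH d E j₁ b₁).1 (MH d E j₂ b₂).1 with h | h
  · exact mh_disjoint_aux d E h1 h2 h hne
  · rw [Set.inter_comm]
    exact mh_disjoint_aux d E h2 h1 h (Ne.symm hne)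

lemma window_of_mem (d : ℕ) {ℓ j : ℕ} (hle : ℓ ≤ j) {b c : Fin d → ℤ}
    (hm : pt d j b ∈ cube d ℓ c) :
    ∀ i, c i * 2 ^ (j - ℓ) ≤ b i ∧ b i < c i * 2 ^ (j - ℓ) + 2 ^ (j - ℓ) := by
  intro i
  obtain ⟨n, rfl⟩ := Nat.exists_eq_add_of_le hle
  simp only [Nat.add_sub_cancel_left]
  obtain ⟨hl, hu⟩ := mem_cube_iff.mp hm i
  have hpt : pt d (ℓ + n) b i * 2 ^ ℓ = (b i : ℝ) / 2 ^ n := by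
    unfold pt
    rw [PiLp.toLp_apply]
    rw [pow_add]
    field_simp
  rw [hpt] at hl hu
  rw [le_div_iff₀ (by positivity)] at hl
  rw [div_lt_iff₀ (by positivity)] at hu
  constructor
  · have h' : ((c i * 2 ^ n : ℤ) : ℝ) ≤ ((b i : ℤ) : ℝ) := by push_cast; exact hl
    exact Int.cast_le.mp h'
  · have : (b i : ℝ) < (c i : ℝ) * 2 ^ n + 2 ^ n := by nlinarith
    have h' : ((b i : ℤ) : ℝ) < ((c i * 2 ^ n + 2 ^ n : ℤ) : ℝ) := by push_cast; exact this
    exact Int.cast_lt.mp h'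


lemma volume_box {d : ℕ} (l u : Fin d → ℝ) :
    volume {x : EuclideanSpace ℝ (Fin d) | ∀ i, l i ≤ x i ∧ x i < u i} =
      ∏ i, ENNReal.ofReal (u i - l i) := by
  have hset : {x : EuclideanSpace ℝ (Fin d) | ∀ i, l i ≤ x i ∧ x i < u i} =
      ((MeasurableEquiv.toLp 2 (Fin d → ℝ)).symm) ⁻¹' (Set.univ.pi fun i => Set.Ico (l i) (u i)) := by
    ext x
    simp [MeasurableEquiv.coe_toLp_symm, Set.mem_pi, Set.mem_Ico]
  rw [hset]
  rw [(EuclideanSpace.volume_preserving_symm_measurableEquiv_toLp (Fin d)).measure_preimage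
    ((MeasurableSet.univ_pi fun i => measurableSet_Ico).nullMeasurableSet)]
  rw [volume_pi_pi]
  simp [Real.volume_Ico]

lemma measurable_box {d : ℕ} (l u : Fin d → ℝ) :
    MeasurableSet {x : EuclideanSpace ℝ (Fin d) | ∀ i, l i ≤ x i ∧ x i < u i} := by
  have hset : {x : EuclideanSpace ℝ (Fin d) | ∀ i, l i ≤ x i ∧ x i < u i} =
      ((MeasurableEquiv.toLp 2 (Fin d → ℝ)).symm) ⁻¹' (Set.univ.pi fun i => Set.Ico (l i) (u i)) := by
    ext x
    simp [MeasurableEquiv.coe_toLp_symm, Set.mem_pi, Set.mem_Ico]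
  rw [hset]
  exact ((MeasurableEquiv.toLp 2 (Fin d → ℝ)).symm).measurable
    (MeasurableSet.univ_pi fun i => measurableSet_Ico)

lemma card_window {d n W : ℕ} (s : Finset (Fin d → Fin n)) (lo : Fin d → ℤ)
    (h : ∀ a ∈ s, ∀ i, lo i ≤ (a i : ℤ) ∧ (a i : ℤ) < lo i + W) : s.card ≤ W ^ d := by
  classical
  rcases Nat.eq_zero_or_pos W with hW | hW
  · subst hW
    rcases Nat.eq_zero_or_pos d with hd | hd
    · subst hd
      have h1 : s.card ≤ Fintype.card (Fin 0 → Fin n) := by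
        simpa [Finset.card_univ] using Finset.card_le_univ s
      simpa using h1
    · have hse : s = ∅ := Finset.eq_empty_of_forall_notMem (by
        intro a ha
        have := h a ha ⟨0, hd⟩
        omega)
      simp [hse]
  · have key : s.card ≤ (Finset.univ : Finset (Fin d → Fin W)).card := by
      apply Finset.card_le_card_of_injOn
        (fun a i => (⟨((a i : ℤ) - lo i).toNat % W, Nat.mod_lt _ hW⟩ : Fin W))
      · intro a _; exact Finset.mem_univ _
      · intro a ha b hb hab
        funext i
        have ha' := h a ha i
        have hb' := h b hb i
        have h1 : ((a i : ℤ) - lo i).toNat % W = ((a i : ℤ) - lo i).toNat :=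
          Nat.mod_eq_of_lt (by omega)
        have h2 : ((b i : ℤ) - lo i).toNat % W = ((b i : ℤ) - lo i).toNat :=
          Nat.mod_eq_of_lt (by omega)
        have := congrFun hab i
        simp only [Fin.mk.injEq, h1, h2] at this
        have : (a i : ℤ) = (b i : ℤ) := by omega
        exact Fin.ext (by exact_mod_cast this)
    calc s.card ≤ _ := key
    _ = W ^ d := by simp [Finset.card_univ]

lemma card_collar {d : ℕ} (s : Finset (Fin d → ℤ)) (lo : Fin d → ℤ) (S c : ℕ)
    (h1 : ∀ b ∈ s, ∀ i, lo i ≤ b i ∧ b i < lo i + S)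
    (h2 : ∀ b ∈ s, ∃ i, b i < lo i + c ∨ lo i + S - c ≤ b i) :
    s.card ≤ d * (2 * c) * S ^ (d - 1) := by
  classical
  rcases Nat.eq_zero_or_pos d with hd | hd
  · have hse : s = ∅ := Finset.eq_empty_of_forall_notMem (by
      intro b hb; obtain ⟨i, -⟩ := h2 b hb; exact absurd i.2 (by omega))
    simp [hse]
  rcases Nat.eq_zero_or_pos c with hc | hc
  · have hse : s = ∅ := Finset.eq_empty_of_forall_notMem (by
      intro b hb
      obtain ⟨i, hi⟩ := h2 b hb
      have := h1 b hb i
      omega)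
    simp [hse]
  rcases Nat.eq_zero_or_pos S with hS | hS
  · have hse : s = ∅ := Finset.eq_empty_of_forall_notMem (by
      intro b hb
      have := h1 b hb ⟨0, hd⟩
      omega)
    simp [hse]
  -- cover s by the d filters
  have hcover : s ⊆ Finset.univ.biUnion (fun i₀ : Fin d =>
      s.filter (fun b => b i₀ < lo i₀ + c ∨ lo i₀ + S - c ≤ b i₀)) := by
    intro b hb
    obtain ⟨i₀, hi₀⟩ := h2 b hb
    exact Finset.mem_biUnion.mpr ⟨i₀, Finset.mem_univ _, Finset.mem_filter.mpr ⟨hb, hi₀⟩⟩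
  have hstep : ∀ i₀ : Fin d,
      (s.filter (fun b => b i₀ < lo i₀ + c ∨ lo i₀ + S - c ≤ b i₀)).card
        ≤ (2 * c) * S ^ (d - 1) := by
    intro i₀
    set t := s.filter (fun b => b i₀ < lo i₀ + c ∨ lo i₀ + S - c ≤ b i₀) with ht
    have hcardtarget :
        Fintype.card (Fin (2 * c) × ({j : Fin d // j ≠ i₀} → Fin S)) = (2 * c) * S ^ (d - 1) := by
      rw [Fintype.card_prod, Fintype.card_fin, Fintype.card_fun, Fintype.card_fin]
      congr 1
      have : Fintype.card {j : Fin d // j ≠ i₀} = d - 1 := by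
        rw [Fintype.card_subtype_compl (· = i₀)]
        · simp [Fintype.card_subtype_eq]
      rw [this]
    have key : t.card ≤ Fintype.card (Fin (2 * c) × ({j : Fin d // j ≠ i₀} → Fin S)) := by
      rw [← Finset.card_univ]
      apply Finset.card_le_card_of_injOn (fun b =>
        ((⟨(if b i₀ < lo i₀ + c then ((b i₀ - lo i₀).toNat) else (c + (b i₀ - (lo i₀ + S - c)).toNat)) % (2 * c),
          Nat.mod_lt _ (by omega)⟩ : Fin (2 * c)),
         fun j => (⟨(b j.1 - lo j.1).toNat % S, Nat.mod_lt _ hS⟩ : Fin S)))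
      · intro b _; exact Finset.mem_univ _
      · intro b hb b' hb' hbb
        have hbs : b ∈ s := (Finset.mem_filter.mp hb).1
        have hb2 : b i₀ < lo i₀ + c ∨ lo i₀ + S - c ≤ b i₀ := (Finset.mem_filter.mp hb).2
        have hbs' : b' ∈ s := (Finset.mem_filter.mp hb').1
        have hb2' : b' i₀ < lo i₀ + c ∨ lo i₀ + S - c ≤ b' i₀ := (Finset.mem_filter.mp hb').2
        have hfst := congrArg Prod.fst hbb
        have hsnd := congrArg Prod.snd hbb
        simp only at hfst hsnd
        funext j
        by_cases hj : j = i₀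
        · subst hj
          have hw := h1 b hbs j
          have hw' := h1 b' hbs' j
          have hfstv := congrArg Fin.val hfst
          simp only at hfstv
          split_ifs at hfstv with hA hB hB
          · have e1 : (b j - lo j).toNat % (2*c) = (b j - lo j).toNat :=
              Nat.mod_eq_of_lt (by omega)
            have e2 : (b' j - lo j).toNat % (2*c) = (b' j - lo j).toNat :=
              Nat.mod_eq_of_lt (by omega)
            rw [e1, e2] at hfstv
            omega
          · have hbr' : lo j + S - c ≤ b' j := hb2'.resolve_left hB
            have e1 : (b j - lo j).toNat % (2*c) = (b j - lo j).toNat :=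
              Nat.mod_eq_of_lt (by omega)
            have e2 : (c + (b' j - (lo j + S - c)).toNat) % (2*c)
                = c + (b' j - (lo j + S - c)).toNat :=
              Nat.mod_eq_of_lt (by omega)
            rw [e1, e2] at hfstv
            omega
          · have hbr : lo j + S - c ≤ b j := hb2.resolve_left hA
            have e1 : (c + (b j - (lo j + S - c)).toNat) % (2*c)
                = c + (b j - (lo j + S - c)).toNat :=
              Nat.mod_eq_of_lt (by omega)
            have e2 : (b' j - lo j).toNat % (2*c) = (b' j - lo j).toNat :=
              Nat.mod_eq_of_lt (by omega)
            rw [e1, e2] at hfstv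
            omega
          · have hbr : lo j + S - c ≤ b j := hb2.resolve_left hA
            have hbr' : lo j + S - c ≤ b' j := hb2'.resolve_left hB
            have e1 : (c + (b j - (lo j + S - c)).toNat) % (2*c)
                = c + (b j - (lo j + S - c)).toNat :=
              Nat.mod_eq_of_lt (by omega)
            have e2 : (c + (b' j - (lo j + S - c)).toNat) % (2*c)
                = c + (b' j - (lo j + S - c)).toNat :=
              Nat.mod_eq_of_lt (by omega)
            rw [e1, e2] at hfstv
            omega
        · have hv := congrArg Fin.val (congrFun hsnd ⟨j, hj⟩)
          simp only at hv
          have hw := h1 b hbs j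
          have hw' := h1 b' hbs' j
          have e1 : (b j - lo j).toNat % S = (b j - lo j).toNat :=
            Nat.mod_eq_of_lt (by omega)
          have e2 : (b' j - lo j).toNat % S = (b' j - lo j).toNat :=
            Nat.mod_eq_of_lt (by omega)
          rw [e1, e2] at hv
          omega
    exact key.trans (le_of_eq hcardtarget)
  calc s.card ≤ _ := Finset.card_le_card hcover
  _ ≤ ∑ i₀ : Fin d, _ := Finset.card_biUnion_le
  _ ≤ ∑ _i₀ : Fin d, (2 * c) * S ^ (d - 1) := Finset.sum_le_sum (fun i _ => hstep i)
  _ = d * (2 * c) * S ^ (d - 1) := by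
    rw [Finset.sum_const, Finset.card_univ, Fintype.card_fin]
    ring


set_option maxHeartbeats 1000000 in
/-- Extraction of a hole cube from a sparse cube. -/
lemma hole_of_sparse {d : ℕ} (hd : 1 ≤ d) {E : Set (EuclideanSpace ℝ (Fin d))}
    {ε : ℝ} (hε : 0 < ε) (hε1 : ε ≤ 1) {m : ℕ}
    (hm : ((2:ℝ) ^ m)⁻¹ ≤ 7 * ε / (8 * Real.sqrt d))
    {k : ℕ} {a : Fin d → ℕ}
    (hne : (dyCube3 d k a ∩ E).Nonempty) (hsp : ε ≤ sparse7 E k a) :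
    ∃ b : Fin d → ℤ,
      (∀ i, ((a i : ℤ) - 3) * 2 ^ m ≤ b i ∧ b i < ((a i : ℤ) + 4) * 2 ^ m) ∧
      cube d (k + m) b ∩ E = ∅ ∧
      (∃ e ∈ E, ∀ i, |(b i : ℝ) * ((2:ℝ) ^ (k + m))⁻¹ - e i| ≤
        (7 * 2 ^ m) * ((2:ℝ) ^ (k + m))⁻¹) := by
  have hsd : (1:ℝ) ≤ Real.sqrt d := by
    rw [show (1:ℝ) = Real.sqrt 1 by simp]
    exact Real.sqrt_le_sqrt (by exact_mod_cast hd)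
  set sd := Real.sqrt d with hsddef
  have hsd0 : (0:ℝ) < sd := by linarith
  set δ : ℝ := 2 ^ (-(k : ℤ)) with hδdef
  have hδ : (0:ℝ) < δ := by positivity
  have hδeq : δ = ((2:ℝ) ^ k)⁻¹ := by
    rw [hδdef, zpow_neg, zpow_natCast]
  -- step 1 : a far point x
  have hsup : ε * (7 * δ) ≤
      ⨆ x : (dyCube7 d k a), Metric.infDist (x : EuclideanSpace ℝ (Fin d)) (dyCube7 d k a ∩ E) := by
    rw [← le_div_iff₀ (by positivity)]
    exact hsp
  have hx0 : (WithLp.toLp 2 (fun i => ((a i : ℝ) - 3) * δ) : EuclideanSpace ℝ (Fin d)) ∈ dyCube7 d k a := by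
    intro i
    refine ⟨le_rfl, ?_⟩
    show ((a i : ℝ) - 3) * δ < ((a i : ℝ) + 4) * δ
    nlinarith
  have hne7 : Nonempty ↥(dyCube7 d k a) := ⟨⟨_, hx0⟩⟩
  have hθ : ε * (7 * δ) / 2 < ⨆ x : (dyCube7 d k a),
      Metric.infDist (x : EuclideanSpace ℝ (Fin d)) (dyCube7 d k a ∩ E) := by
    have h1 : 0 < ε * (7 * δ) := by positivity
    linarith
  obtain ⟨⟨x, hx7⟩, hxfar⟩ := exists_lt_of_lt_ciSup hθ
  set θ : ℝ := ε * (7 * δ) / 2 with hθdef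
  simp only at hxfar
  -- step 2 : the box
  set r : ℝ := 7 * ε * δ / (4 * sd) with hrdef
  have hr : 0 < r := by positivity
  have hr7 : r ≤ 7 * δ := by
    rw [hrdef, div_le_iff₀ (by positivity)]
    nlinarith
  set y : Fin d → ℝ := fun i => min (x i) (((a i : ℝ) + 4) * δ - r) with hydef
  have hyL : ∀ i, ((a i : ℝ) - 3) * δ ≤ y i := by
    intro i
    apply le_min (hx7 i).1
    nlinarith
  have hyU : ∀ i, y i + r ≤ ((a i : ℝ) + 4) * δ := by
    intro i
    have := min_le_right (x i) (((a i : ℝ) + 4) * δ - r)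
    rw [hydef]
    simp only
    linarith
  have hxy : ∀ i, y i ≤ x i ∧ x i ≤ y i + r := by
    intro i
    constructor
    · exact min_le_left _ _
    · rcases le_total (x i) (((a i : ℝ) + 4) * δ - r) with h | h
      · rw [hydef]; simp only [min_eq_left h]; linarith
      · rw [hydef]; simp only [min_eq_right h]
        have := (hx7 i).2
        linarith
  have hsdreq : sd * r = 7 * ε * δ / 4 := by
    rw [hrdef]
    field_simp
  have hsdr : sd * r < θ := by
    rw [hsdreq, hθdef]
    rw [div_lt_div_iff₀ (by norm_num) (by norm_num)]
    nlinarith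
  -- box avoids E
  have hBoxE : ∀ z : EuclideanSpace ℝ (Fin d), (∀ i, y i ≤ z i ∧ z i < y i + r) → z ∉ E := by
    intro z hz hzE
    have hz7 : z ∈ dyCube7 d k a := by
      intro i
      constructor
      · exact le_trans (hyL i) (hz i).1
      · exact lt_of_lt_of_le (hz i).2 (hyU i)
    have hdzx : dist z x ≤ sd * r := by
      rw [EuclideanSpace.dist_eq]
      have hterm : ∀ i ∈ Finset.univ, dist (z i) (x i) ^ 2 ≤ r ^ 2 := by
        intro i _
        have h1 : |z i - x i| ≤ r := by
          rw [abs_le]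
          have := hz i
          have := hxy i
          constructor <;> linarith
        rw [Real.dist_eq]
        nlinarith [abs_nonneg (z i - x i)]
      have hsum : ∑ i, dist (z i) (x i) ^ 2 ≤ (d : ℝ) * r ^ 2 := by
        have h2 := Finset.sum_le_sum hterm
        rw [Finset.sum_const, Finset.card_univ, Fintype.card_fin, nsmul_eq_mul] at h2
        exact h2
      refine le_trans (Real.sqrt_le_sqrt hsum) ?_
      rw [Real.sqrt_mul (by positivity), Real.sqrt_sq hr.le]
    have hzmem : z ∈ dyCube7 d k a ∩ E := ⟨hz7, hzE⟩
    have : infDist x (dyCube7 d k a ∩ E) ≤ sd * r := by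
      refine le_trans (Metric.infDist_le_dist_of_mem hzmem) ?_
      rw [dist_comm]
      exact hdzx
    linarith
  -- step 3 : the dyadic hole cube
  set J : ℕ := k + m with hJdef
  set η : ℝ := ((2:ℝ) ^ J)⁻¹ with hηdef
  have hη0 : (0:ℝ) < η := by positivity
  have h2J : (0:ℝ) < (2:ℝ) ^ J := by positivity
  have hηδ : η = δ * ((2:ℝ) ^ m)⁻¹ := by
    rw [hηdef, hδeq, hJdef, pow_add, mul_inv]
  have hηr : η ≤ r / 2 := by
    have h1 : δ * ((2:ℝ) ^ m)⁻¹ ≤ δ * (7 * ε / (8 * sd)) :=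
      mul_le_mul_of_nonneg_left hm hδ.le
    have h2 : δ * (7 * ε / (8 * sd)) = r / 2 := by
      rw [hrdef]
      field_simp
      ring
    rw [hηδ]
    linarith
  set cen : Fin d → ℝ := fun i => y i + r / 2 with hcendef
  set b : Fin d → ℤ := fun i => ⌊cen i * 2 ^ J⌋ with hbdef
  have hble : ∀ i, (b i : ℝ) ≤ cen i * 2 ^ J := fun i => Int.floor_le _
  have hblt : ∀ i, cen i * 2 ^ J < (b i : ℝ) + 1 := fun i => Int.lt_floor_add_one _
  -- b * η bounds
  have hbη : ∀ i, y i ≤ (b i : ℝ) * η ∧ (b i : ℝ) * η ≤ y i + r / 2 := by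
    intro i
    have h1 : (b i : ℝ) * η ≤ cen i := by
      have := hble i
      calc (b i : ℝ) * η ≤ (cen i * 2 ^ J) * η := by
            apply mul_le_mul_of_nonneg_right this hη0.le
      _ = cen i := by
            rw [hηdef]
            field_simp
    have h2 : cen i - η < (b i : ℝ) * η := by
      have := hblt i
      have h3 : (cen i * 2 ^ J - 1) * η < (b i : ℝ) * η := by
        apply mul_lt_mul_of_pos_right (by linarith) hη0
      calc cen i - η = (cen i * 2 ^ J - 1) * η := by
            rw [hηdef]
            field_simp
      _ < (b i : ℝ) * η := h3
    constructor
    · have : cen i - η ≥ y i := by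
        rw [hcendef]
        simp only
        linarith
      linarith
    · rw [hcendef] at h1
      simp only at h1
      linarith
  -- the hole cube is inside the box
  have hcubeBox : ∀ w : EuclideanSpace ℝ (Fin d), w ∈ cube d J b →
      ∀ i, y i ≤ w i ∧ w i < y i + r := by
    intro w hw i
    obtain ⟨hw1, hw2⟩ := mem_cube_iff.mp hw i
    have hwi1 : (b i : ℝ) * η ≤ w i := by
      calc (b i : ℝ) * η ≤ (w i * 2 ^ J) * η := mul_le_mul_of_nonneg_right hw1 hη0.le
      _ = w i := by rw [hηdef]; field_simp
    have hwi2 : w i < ((b i : ℝ) + 1) * η := by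
      have := mul_lt_mul_of_pos_right hw2 hη0
      calc w i = (w i * 2 ^ J) * η := by rw [hηdef]; field_simp
      _ < ((b i : ℝ) + 1) * η := this
    have hb1 := (hbη i).1
    have hb2 := (hbη i).2
    constructor
    · linarith
    · have : ((b i : ℝ) + 1) * η = (b i : ℝ) * η + η := by ring
      linarith
  have hEmpty : cube d J b ∩ E = ∅ := by
    rw [Set.eq_empty_iff_forall_notMem]
    rintro z ⟨hz1, hz2⟩
    exact hBoxE z (hcubeBox z hz1) hz2
  -- window inequalities
  have hδη : δ = 2 ^ m * η := by
    rw [hηδ]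
    field_simp
  have hwin : ∀ i, ((a i : ℤ) - 3) * 2 ^ m ≤ b i ∧ b i < ((a i : ℤ) + 4) * 2 ^ m := by
    intro i
    have hb1 := (hbη i).1
    have hb2 := (hbη i).2
    have hL : ((a i : ℝ) - 3) * δ ≤ (b i : ℝ) * η := le_trans (hyL i) hb1
    have hU : (b i : ℝ) * η < ((a i : ℝ) + 4) * δ := by
      have := hyU i
      linarith
    rw [hδη] at hL hU
    constructor
    · have hL' : (((a i : ℝ) - 3) * 2 ^ m) * η ≤ (b i : ℝ) * η := by
        calc (((a i : ℝ) - 3) * 2 ^ m) * η = ((a i : ℝ) - 3) * (2 ^ m * η) := by ring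
        _ ≤ (b i : ℝ) * η := hL
      have h2 : ((a i : ℝ) - 3) * 2 ^ m ≤ (b i : ℝ) := le_of_mul_le_mul_right hL' hη0
      exact_mod_cast h2
    · have hU' : (b i : ℝ) * η < (((a i : ℝ) + 4) * 2 ^ m) * η := by
        calc (b i : ℝ) * η < ((a i : ℝ) + 4) * (2 ^ m * η) := hU
        _ = (((a i : ℝ) + 4) * 2 ^ m) * η := by ring
      have h2 : (b i : ℝ) < ((a i : ℝ) + 4) * 2 ^ m := lt_of_mul_lt_mul_right hU' hη0.le
      exact_mod_cast h2
  refine ⟨b, hwin, hEmpty, ?_⟩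
  -- nearness to E
  obtain ⟨e, he3, heE⟩ := hne
  refine ⟨e, heE, ?_⟩
  intro i
  have he3i := he3 i
  have hb1 := (hbη i).1
  have hb2 := (hbη i).2
  have hyLi := hyL i
  have hyUi := hyU i
  have h7 : (7 * 2 ^ m : ℝ) * η = 7 * δ := by
    rw [hδη]
    ring
  rw [abs_le, h7]
  have ha3 : ((a i : ℝ) - 3) * δ = (a i : ℝ) * δ - 3 * δ := by ring
  have ha4 : ((a i : ℝ) + 4) * δ = (a i : ℝ) * δ + 4 * δ := by ring
  have ha1 : ((a i : ℝ) - 1) * δ = (a i : ℝ) * δ - 1 * δ := by ring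
  have ha2 : ((a i : ℝ) + 2) * δ = (a i : ℝ) * δ + 2 * δ := by ring
  have hel := he3i.1
  have heu := he3i.2
  constructor
  · linarith
  · linarith



/-- the collection of "hole cubes": dyadic cubes disjoint from `E` whose corner is
`≤ cc` sidelengths away from a point of `E`. -/
def HoleSet (d : ℕ) (E : Set (EuclideanSpace ℝ (Fin d))) (cc j : ℕ) : Set (Fin d → ℤ) :=
  {b | cube d j b ∩ E = ∅ ∧
    ∃ e ∈ E, ∀ i, |(b i : ℝ) * ((2:ℝ) ^ j)⁻¹ - e i| ≤ (cc : ℝ) * ((2:ℝ) ^ j)⁻¹}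

def HF (d : ℕ) (E : Set (EuclideanSpace ℝ (Fin d))) (cc j : ℕ) : Finset (Fin d → ℤ) :=
  Finset.filter (· ∈ HoleSet d E cc j)
    (Finset.Icc (fun _ => -(cc:ℤ) - 1) (fun _ => 2 ^ j + cc + 1))

def uu (d j : ℕ) : ℝ≥0∞ := ((2:ℝ≥0∞)⁻¹) ^ (j * d)

lemma uval (j : ℕ) : ENNReal.ofReal (((2:ℝ) ^ j)⁻¹) = ((2:ℝ≥0∞)⁻¹) ^ j := by
  rw [ENNReal.ofReal_inv_of_pos (by positivity), ← ENNReal.inv_pow]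
  congr 1
  rw [ENNReal.ofReal_pow (by norm_num)]
  norm_num

lemma cube_eq_box (d j : ℕ) (b : Fin d → ℤ) : cube d j b =
    {x : EuclideanSpace ℝ (Fin d) | ∀ i,
      (b i : ℝ) * ((2:ℝ) ^ j)⁻¹ ≤ x i ∧ x i < ((b i : ℝ) + 1) * ((2:ℝ) ^ j)⁻¹} := by
  ext x
  rw [mem_cube_iff]
  show _ ↔ ∀ i, _
  apply forall_congr'
  intro i
  have hp : (0:ℝ) < 2 ^ j := by positivity
  constructor
  · rintro ⟨h1, h2⟩
    constructor
    · rw [← div_le_iff₀ hp] at h1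
      rw [div_eq_mul_inv] at h1
      exact h1
    · rw [← lt_div_iff₀ hp] at h2
      rw [div_eq_mul_inv] at h2
      exact h2
  · rintro ⟨h1, h2⟩
    rw [← div_eq_mul_inv] at h1
    rw [← div_eq_mul_inv] at h2
    rw [← div_le_iff₀ hp, ← lt_div_iff₀ hp]
    exact ⟨h1, h2⟩

lemma volume_cube (d j : ℕ) (b : Fin d → ℤ) : volume (cube d j b) = uu d j := by
  rw [cube_eq_box, volume_box]
  have : ∀ i : Fin d, ENNReal.ofReal (((b i : ℝ) + 1) * ((2:ℝ) ^ j)⁻¹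
      - (b i : ℝ) * ((2:ℝ) ^ j)⁻¹) = ((2:ℝ≥0∞)⁻¹) ^ j := by
    intro i
    rw [show ((b i : ℝ) + 1) * ((2:ℝ) ^ j)⁻¹ - (b i : ℝ) * ((2:ℝ) ^ j)⁻¹
      = ((2:ℝ) ^ j)⁻¹ by ring]
    exact uval j
  rw [Finset.prod_congr rfl (fun i _ => this i)]
  rw [Finset.prod_const, Finset.card_univ, Fintype.card_fin, uu, ← pow_mul]

lemma measurable_cube (d j : ℕ) (b : Fin d → ℤ) : MeasurableSet (cube d j b) := by
  rw [cube_eq_box]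
  exact measurable_box _ _


def MaxSet (d : ℕ) (E : Set (EuclideanSpace ℝ (Fin d))) (cc : ℕ) : Set (ℕ × (Fin d → ℤ)) :=
  {p | ∃ j b, b ∈ HoleSet d E cc j ∧ MH d E j b = p}

lemma maxset_empty {d : ℕ} {E : Set (EuclideanSpace ℝ (Fin d))} {cc : ℕ}
    {p : ℕ × (Fin d → ℤ)} (hp : p ∈ MaxSet d E cc) : cube d p.1 p.2 ∩ E = ∅ := by
  obtain ⟨j, b, hb, rfl⟩ := hp
  exact stop_empty d hb.1

lemma pt_bounds {d : ℕ} {E : Set (EuclideanSpace ℝ (Fin d))} (hE : E ⊆ unitCube d) {cc j : ℕ}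
    {b : Fin d → ℤ} (hb : b ∈ HoleSet d E cc j) :
    ∀ i, -(cc:ℝ) ≤ pt d j b i ∧ pt d j b i ≤ 1 + cc := by
  intro i
  obtain ⟨-, e, heE, hnear⟩ := hb
  have he := hE heE i
  have hi := hnear i
  rw [abs_le] at hi
  have hη1 : ((2:ℝ) ^ j)⁻¹ ≤ 1 := by
    rw [inv_le_one_iff₀]
    right
    exact one_le_pow₀ (by norm_num)
  have hccη : (cc:ℝ) * ((2:ℝ) ^ j)⁻¹ ≤ cc := by
    calc (cc:ℝ) * ((2:ℝ) ^ j)⁻¹ ≤ (cc:ℝ) * 1 :=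
          mul_le_mul_of_nonneg_left hη1 (by positivity)
    _ = cc := mul_one _
  unfold pt
  simp only [PiLp.toLp_apply]
  constructor <;> [linarith [hi.2]; linarith [hi.1]]

lemma maxset_box {d : ℕ} {E : Set (EuclideanSpace ℝ (Fin d))} (hE : E ⊆ unitCube d) {cc : ℕ}
    {p : ℕ × (Fin d → ℤ)} (hp : p ∈ MaxSet d E cc) :
    cube d p.1 p.2 ⊆ {x : EuclideanSpace ℝ (Fin d) | ∀ i, -(cc:ℝ)-1 ≤ x i ∧ x i < (cc:ℝ)+2} := by
  obtain ⟨j, b, hb, rfl⟩ := hp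
  intro z hz i
  have hle := stopLevel_le d E j b
  have hptm : pt d j b ∈ cube d (MH d E j b).1 (MH d E j b).2 := pt_mem_anc d hle b
  have h1 := mem_cube_iff.mp hptm i
  have h2 := mem_cube_iff.mp hz i
  have hpb := pt_bounds hE hb i
  set ℓ : ℕ := (MH d E j b).1
  have h2ℓ : (1:ℝ) ≤ 2 ^ ℓ := one_le_pow₀ (by norm_num)
  have h2ℓ0 : (0:ℝ) < 2 ^ ℓ := by positivity
  constructor
  · -- z i > pt - 1 ≥ -cc - 1
    have key : (pt d j b i - 1) * 2 ^ ℓ ≤ z i * 2 ^ ℓ := by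
      nlinarith [h1.2, h2.1]
    have := le_of_mul_le_mul_right key h2ℓ0
    linarith [hpb.1]
  · have key : z i * 2 ^ ℓ < (pt d j b i + 1) * 2 ^ ℓ := by
      nlinarith [h1.1, h2.2]
    have := lt_of_mul_lt_mul_right key h2ℓ0.le
    linarith [hpb.2]

set_option maxHeartbeats 1000000 in
lemma perP {d : ℕ} (hd : 1 ≤ d) {E : Set (EuclideanSpace ℝ (Fin d))}
    {cc : ℕ} {p : ℕ × (Fin d → ℤ)} (hp : p ∈ MaxSet d E cc) :
    ∑' j : ℕ, (((HF d E cc j).filter (fun b => MH d E j b = p)).card : ℝ≥0∞) * uu d j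
      ≤ ((4 * d * cc : ℕ) : ℝ≥0∞) * uu d p.1 := by
  obtain ⟨ℓ, cbar⟩ := p
  have hpE : cube d ℓ cbar ∩ E = ∅ := maxset_empty hp
  -- cardinality bound for each level
  have hcard : ∀ j, ℓ ≤ j →
      ((HF d E cc j).filter (fun b => MH d E j b = (ℓ, cbar))).card
        ≤ d * (2 * cc) * (2 ^ (j - ℓ)) ^ (d - 1) := by
    intro j hlj
    apply card_collar _ (fun i => cbar i * 2 ^ (j - ℓ)) (2 ^ (j - ℓ)) cc
    · intro b hb
      obtain ⟨hbHF, hbMH⟩ := Finset.mem_filter.mp hb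
      have hptm : pt d j b ∈ cube d ℓ cbar := by
        rw [MH, Prod.mk.injEq] at hbMH
        obtain ⟨hfst, hsnd⟩ := hbMH
        rw [hfst] at hsnd
        have h := pt_mem_anc d hlj b
        rw [hsnd] at h
        exact h
      have hwin := window_of_mem d hlj hptm
      intro i
      obtain ⟨hw1, hw2⟩ := hwin i
      constructor
      · exact hw1
      · calc b i < cbar i * 2 ^ (j - ℓ) + 2 ^ (j - ℓ) := hw2
        _ = cbar i * 2 ^ (j - ℓ) + ((2 ^ (j - ℓ) : ℕ) : ℤ) := by push_cast; ring
    · intro b hb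
      obtain ⟨hbHF, hbMH⟩ := Finset.mem_filter.mp hb
      have hbHole : b ∈ HoleSet d E cc j := (Finset.mem_filter.mp hbHF).2
      obtain ⟨hbEmpty, e, heE, hnear⟩ := hbHole
      have henot : e ∉ cube d ℓ cbar := by
        intro hmem
        rw [Set.eq_empty_iff_forall_notMem] at hpE
        exact hpE e ⟨hmem, heE⟩
      rw [mem_cube_iff] at henot
      push_neg at henot
      obtain ⟨i₀, hbad⟩ := henot
      refine ⟨i₀, ?_⟩
      have hinear := hnear i₀
      rw [abs_le] at hinear
      have h2j : (0:ℝ) < (2:ℝ) ^ j := by positivity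
      have hsplit : (2:ℝ) ^ j = 2 ^ ℓ * 2 ^ (j - ℓ) := by
        rw [← pow_add]
        congr 1
        omega
      have h2jl : (0:ℝ) < (2:ℝ) ^ (j - ℓ) := by positivity
      -- b i₀ ≤ e i₀ * 2^j + cc  and  b i₀ ≥ e i₀ * 2^j - cc
      have hbu : (b i₀ : ℝ) ≤ e i₀ * 2 ^ j + cc := by
        have h := mul_le_mul_of_nonneg_right hinear.2 h2j.le
        have e1 : ((b i₀:ℝ) * ((2:ℝ)^j)⁻¹ - e i₀) * 2^j = (b i₀ : ℝ) - e i₀ * 2^j := by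
          field_simp
        have e2 : (cc:ℝ) * ((2:ℝ)^j)⁻¹ * 2^j = cc := by field_simp
        rw [e1, e2] at h
        linarith
      have hbl : e i₀ * 2 ^ j - cc ≤ (b i₀ : ℝ) := by
        have h := mul_le_mul_of_nonneg_right hinear.1 h2j.le
        have e1 : ((b i₀:ℝ) * ((2:ℝ)^j)⁻¹ - e i₀) * 2^j = (b i₀ : ℝ) - e i₀ * 2^j := by
          field_simp
        have e2 : -((cc:ℝ) * ((2:ℝ)^j)⁻¹) * 2^j = -cc := by field_simp
        rw [e1, e2] at h
        linarith
      rcases le_or_gt (cbar i₀ : ℝ) (e i₀ * 2 ^ ℓ) with hc | hc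
      · right
        have hge : ((cbar i₀ : ℝ) + 1) * 2 ^ (j - ℓ) ≤ (e i₀ * 2 ^ ℓ) * 2 ^ (j - ℓ) :=
          mul_le_mul_of_nonneg_right (hbad hc) h2jl.le
        have heq : (e i₀ * 2 ^ ℓ) * 2 ^ (j - ℓ) = e i₀ * 2 ^ j := by
          rw [hsplit]; ring
        have hreal : (cbar i₀ : ℝ) * 2 ^ (j - ℓ) + 2 ^ (j - ℓ) - cc ≤ (b i₀ : ℝ) := by
          rw [heq] at hge
          nlinarith
        have : ((cbar i₀ * 2 ^ (j - ℓ) + ((2:ℤ) ^ (j - ℓ)) - cc : ℤ) : ℝ) ≤ ((b i₀ : ℤ) : ℝ) := by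
          push_cast
          convert hreal using 2
        have hZ : cbar i₀ * 2 ^ (j - ℓ) + ((2:ℤ) ^ (j - ℓ)) - cc ≤ b i₀ := by exact_mod_cast this
        calc (fun i => cbar i * 2 ^ (j - ℓ)) i₀ + ((2 ^ (j - ℓ) : ℕ) : ℤ) - (cc : ℤ)
            = cbar i₀ * 2 ^ (j - ℓ) + ((2:ℤ) ^ (j - ℓ)) - cc := by push_cast; ring
        _ ≤ b i₀ := hZ
      · left
        have hlt : (e i₀ * 2 ^ ℓ) * 2 ^ (j - ℓ) < (cbar i₀ : ℝ) * 2 ^ (j - ℓ) :=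
          mul_lt_mul_of_pos_right hc h2jl
        have heq : (e i₀ * 2 ^ ℓ) * 2 ^ (j - ℓ) = e i₀ * 2 ^ j := by
          rw [hsplit]; ring
        have hreal : (b i₀ : ℝ) < (cbar i₀ : ℝ) * 2 ^ (j - ℓ) + cc := by
          rw [heq] at hlt
          linarith
        have hZ : b i₀ < cbar i₀ * 2 ^ (j - ℓ) + cc := by exact_mod_cast hreal
        exact hZ
  -- levels below ℓ are empty
  have hzero : ∀ j, j < ℓ →
      ((HF d E cc j).filter (fun b => MH d E j b = (ℓ, cbar))) = ∅ := by
    intro j hj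
    rw [Finset.filter_eq_empty_iff]
    intro b _ hMH
    rw [MH, Prod.mk.injEq] at hMH
    obtain ⟨h1, -⟩ := hMH
    have := stopLevel_le d E j b
    omega
  set f : ℕ → ℝ≥0∞ := fun j =>
    (((HF d E cc j).filter (fun b => MH d E j b = (ℓ, cbar))).card : ℝ≥0∞) * uu d j with hf
  have hshift : ∑' j, f j = ∑' t, f (ℓ + t) := by
    symm
    apply Function.Injective.tsum_eq (add_right_injective ℓ)
    intro j hj
    rcases le_or_gt ℓ j with h | h
    · exact ⟨j - ℓ, by show ℓ + (j - ℓ) = j; omega⟩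
    · exfalso
      apply hj
      rw [hf]
      simp [hzero j h]
  have hterm : ∀ t, f (ℓ + t) ≤
      ((d * (2 * cc) : ℕ) : ℝ≥0∞) * ((2:ℝ≥0∞)⁻¹) ^ (ℓ * d) * ((2:ℝ≥0∞)⁻¹) ^ t := by
    intro t
    have hc1 := hcard (ℓ + t) (Nat.le_add_right _ _)
    have ht : ℓ + t - ℓ = t := by omega
    rw [ht] at hc1
    have hcast : (((HF d E cc (ℓ+t)).filter (fun b => MH d E (ℓ+t) b = (ℓ, cbar))).card : ℝ≥0∞)
        ≤ ((d * (2 * cc) * (2 ^ t) ^ (d - 1) : ℕ) : ℝ≥0∞) := by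
      exact_mod_cast hc1
    have h1 : f (ℓ + t) ≤ ((d * (2 * cc) * (2 ^ t) ^ (d - 1) : ℕ) : ℝ≥0∞) * uu d (ℓ + t) := by
      rw [hf]
      exact mul_le_mul_of_nonneg_right hcast zero_le
    refine h1.trans (le_of_eq ?_)
    have htd : t * d = t * (d - 1) + t := by
      have h' : d - 1 + 1 = d := Nat.succ_pred_eq_of_pos hd
      calc t * d = t * ((d - 1) + 1) := by rw [h']
      _ = t * (d - 1) + t := by ring
    have hdd : (ℓ + t) * d = ℓ * d + (t * (d - 1) + t) := by
      rw [← htd]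
      ring
    rw [uu, hdd, pow_add, pow_add]
    push_cast
    have hcan : (2:ℝ≥0∞) ^ (t * (d-1)) * (2⁻¹:ℝ≥0∞) ^ (t * (d-1)) = 1 := by
      rw [← mul_pow, ENNReal.mul_inv_cancel (by norm_num) (by norm_num), one_pow]
    have hpm : ((2:ℝ≥0∞) ^ t) ^ (d - 1) = (2:ℝ≥0∞) ^ (t * (d-1)) := by
      rw [← pow_mul]
    rw [hpm]
    calc (d:ℝ≥0∞) * (2 * cc) * (2:ℝ≥0∞) ^ (t * (d-1))
          * ((2⁻¹:ℝ≥0∞) ^ (ℓ * d) * ((2⁻¹:ℝ≥0∞) ^ (t * (d-1)) * (2⁻¹:ℝ≥0∞) ^ t))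
        = ((2:ℝ≥0∞) ^ (t * (d-1)) * (2⁻¹:ℝ≥0∞) ^ (t * (d-1)))
          * ((d:ℝ≥0∞) * (2 * cc) * (2⁻¹:ℝ≥0∞) ^ (ℓ * d) * (2⁻¹:ℝ≥0∞) ^ t) := by ring
    _ = (d:ℝ≥0∞) * (2 * cc) * (2⁻¹:ℝ≥0∞) ^ (ℓ * d) * (2⁻¹:ℝ≥0∞) ^ t := by
        rw [hcan, one_mul]
  calc ∑' j, f j = ∑' t, f (ℓ + t) := hshift
  _ ≤ ∑' t, ((d * (2 * cc) : ℕ) : ℝ≥0∞) * ((2:ℝ≥0∞)⁻¹) ^ (ℓ * d) * ((2:ℝ≥0∞)⁻¹) ^ t :=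
      ENNReal.tsum_le_tsum hterm
  _ = ((d * (2 * cc) : ℕ) : ℝ≥0∞) * ((2:ℝ≥0∞)⁻¹) ^ (ℓ * d) * 2 := by
      rw [ENNReal.tsum_mul_left, ENNReal.tsum_geometric, ENNReal.one_sub_inv_two, inv_inv]
  _ = ((4 * d * cc : ℕ) : ℝ≥0∞) * uu d ℓ := by
      rw [uu]
      push_cast
      ring


lemma mem_HF_of_hole {d : ℕ} {E : Set (EuclideanSpace ℝ (Fin d))} (hE : E ⊆ unitCube d)
    {cc j : ℕ} {b : Fin d → ℤ} (hb : b ∈ HoleSet d E cc j) : b ∈ HF d E cc j := by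
  rw [HF, Finset.mem_filter]
  refine ⟨?_, hb⟩
  rw [Finset.mem_Icc]
  obtain ⟨-, e, heE, hnear⟩ := hb
  have h2j : (0:ℝ) < 2 ^ j := by positivity
  constructor <;> intro i
  · show -(cc:ℤ) - 1 ≤ b i
    have he := (hE heE i).1
    have hi := (abs_le.mp (hnear i)).1
    have hstep : (-(cc:ℝ)) * ((2:ℝ)^j)⁻¹ ≤ (b i : ℝ) * ((2:ℝ)^j)⁻¹ := by linarith
    have h := mul_le_mul_of_nonneg_right hstep h2j.le
    have e1 : (-(cc:ℝ)) * ((2:ℝ)^j)⁻¹ * 2^j = -(cc:ℝ) := by field_simp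
    have e2 : (b i : ℝ) * ((2:ℝ)^j)⁻¹ * 2^j = (b i : ℝ) := by field_simp
    rw [e1, e2] at h
    have hZ : -(cc:ℤ) ≤ b i := by exact_mod_cast h
    omega
  · show b i ≤ 2 ^ j + (cc:ℤ) + 1
    have he := (hE heE i).2
    have hi := (abs_le.mp (hnear i)).2
    have hstep : (b i : ℝ) * ((2:ℝ)^j)⁻¹ ≤ (1 + (cc:ℝ) * ((2:ℝ)^j)⁻¹) := by linarith
    have h := mul_le_mul_of_nonneg_right hstep h2j.le
    have e1 : (b i : ℝ) * ((2:ℝ)^j)⁻¹ * 2^j = (b i : ℝ) := by field_simp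
    have e2 : (1 + (cc:ℝ) * ((2:ℝ)^j)⁻¹) * 2^j = 2^j + cc := by field_simp
    rw [e1, e2] at h
    have hZ : b i ≤ 2 ^ j + (cc:ℤ) := by exact_mod_cast h
    omega

set_option maxHeartbeats 1000000 in
lemma corePacking {d : ℕ} (hd : 1 ≤ d) {E : Set (EuclideanSpace ℝ (Fin d))}
    (hE : E ⊆ unitCube d) (cc : ℕ) :
    ∑' j : ℕ, ∑ _b ∈ HF d E cc j, uu d j
      ≤ ((4 * d * cc : ℕ) : ℝ≥0∞) * ((2 * cc + 3 : ℕ) : ℝ≥0∞) ^ d := by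
  have hfiber : ∀ j : ℕ, (∑ _b ∈ HF d E cc j, uu d j) =
      ∑' p : ℕ × (Fin d → ℤ),
        (((HF d E cc j).filter (fun b => MH d E j b = p)).card : ℝ≥0∞) * uu d j := by
    intro j
    rw [tsum_eq_sum (s := (HF d E cc j).image (MH d E j))
      (by
        intro p hp
        have hemp : (HF d E cc j).filter (fun b => MH d E j b = p) = ∅ := by
          rw [Finset.filter_eq_empty_iff]
          intro b hb heq
          exact hp (heq ▸ Finset.mem_image_of_mem _ hb)
        rw [hemp]
        simp)]
    have hmaps := Finset.sum_fiberwise_of_maps_to (g := MH d E j)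
      (t := (HF d E cc j).image (MH d E j))
      (fun b hb => Finset.mem_image_of_mem _ hb) (fun _ => uu d j)
    rw [← hmaps]
    apply Finset.sum_congr rfl
    intro p _
    rw [Finset.sum_const, nsmul_eq_mul]
  have hsupp : Function.support (fun p : ℕ × (Fin d → ℤ) =>
      ∑' j : ℕ, (((HF d E cc j).filter (fun b => MH d E j b = p)).card : ℝ≥0∞) * uu d j)
      ⊆ MaxSet d E cc := by
    intro p hp
    by_contra hnot
    apply hp
    have : ∀ j : ℕ, (((HF d E cc j).filter (fun b => MH d E j b = p)).card : ℝ≥0∞) * uu d j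
        = 0 := by
      intro j
      have hemp : (HF d E cc j).filter (fun b => MH d E j b = p) = ∅ := by
        rw [Finset.filter_eq_empty_iff]
        intro b hb heq
        exact hnot ⟨j, b, (Finset.mem_filter.mp hb).2, heq⟩
      rw [hemp]
      simp
    simp only [this, tsum_zero]
  have hdisj : Pairwise (Function.onFun Disjoint
      fun p : ↥(MaxSet d E cc) => cube d p.val.1 p.val.2) := by
    intro p q hpq
    obtain ⟨j1, b1, hb1, h1⟩ := p.2
    obtain ⟨j2, b2, hb2, h2⟩ := q.2
    have hne : MH d E j1 b1 ≠ MH d E j2 b2 := by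
      rw [h1, h2]
      exact fun h => hpq (Subtype.ext h)
    have hdis := mh_disjoint d E hb1.1 hb2.1 hne
    rw [h1, h2] at hdis
    exact Set.disjoint_iff_inter_eq_empty.mpr hdis
  calc ∑' j : ℕ, ∑ _b ∈ HF d E cc j, uu d j
      = ∑' (j : ℕ) (p : ℕ × (Fin d → ℤ)),
        (((HF d E cc j).filter (fun b => MH d E j b = p)).card : ℝ≥0∞) * uu d j :=
        tsum_congr hfiber
  _ = ∑' (p : ℕ × (Fin d → ℤ)) (j : ℕ),
        (((HF d E cc j).filter (fun b => MH d E j b = p)).card : ℝ≥0∞) * uu d j :=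
        ENNReal.tsum_comm
  _ = ∑' (p : ↥(MaxSet d E cc)) , ∑' (j : ℕ),
        (((HF d E cc j).filter (fun b => MH d E j b = p.val)).card : ℝ≥0∞) * uu d j :=
        (tsum_subtype_eq_of_support_subset hsupp).symm
  _ ≤ ∑' (p : ↥(MaxSet d E cc)), ((4 * d * cc : ℕ) : ℝ≥0∞) * uu d p.val.1 :=
        ENNReal.tsum_le_tsum (fun p => perP hd p.2)
  _ = ((4 * d * cc : ℕ) : ℝ≥0∞) *
        ∑' (p : ↥(MaxSet d E cc)), volume (cube d p.val.1 p.val.2) := by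
        rw [ENNReal.tsum_mul_left]
        congr 1
        apply tsum_congr
        intro p
        rw [volume_cube]
  _ = ((4 * d * cc : ℕ) : ℝ≥0∞) *
        volume (⋃ p : ↥(MaxSet d E cc), cube d p.val.1 p.val.2) := by
        rw [measure_iUnion hdisj (fun p => measurable_cube d _ _)]
  _ ≤ ((4 * d * cc : ℕ) : ℝ≥0∞) *
        volume {x : EuclideanSpace ℝ (Fin d) | ∀ i, -(cc:ℝ)-1 ≤ x i ∧ x i < (cc:ℝ)+2} := by
        apply mul_le_mul_right
        apply measure_mono
        apply Set.iUnion_subset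
        intro p
        exact maxset_box hE p.2
  _ = ((4 * d * cc : ℕ) : ℝ≥0∞) * ((2 * cc + 3 : ℕ) : ℝ≥0∞) ^ d := by
        rw [volume_box]
        congr 1
        have hval : ∀ i : Fin d, ENNReal.ofReal ((cc:ℝ) + 2 - (-(cc:ℝ) - 1))
            = ((2 * cc + 3 : ℕ) : ℝ≥0∞) := by
          intro i
          rw [show (cc:ℝ) + 2 - (-(cc:ℝ) - 1) = ((2 * cc + 3 : ℕ) : ℝ) by push_cast; ring]
          exact ENNReal.ofReal_natCast _
        rw [Finset.prod_congr rfl (fun i _ => hval i), Finset.prod_const,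
          Finset.card_univ, Fintype.card_fin]


lemma volume_dyCube (d k : ℕ) (a : Fin d → ℕ) : volume (dyCube d k a) = uu d k := by
  have h1 : volume {x : EuclideanSpace ℝ (Fin d) | ∀ i,
      (a i : ℝ) * 2 ^ (-(k:ℤ)) ≤ x i ∧ x i < ((a i : ℝ) + 1) * 2 ^ (-(k:ℤ))} =
      ∏ i : Fin d, ENNReal.ofReal (((a i : ℝ) + 1) * 2 ^ (-(k:ℤ)) - (a i : ℝ) * 2 ^ (-(k:ℤ))) :=
    volume_box _ _
  have h2 : volume (dyCube d k a) = _ := h1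
  rw [h2]
  have hδ : ∀ i : Fin d, ((a i : ℝ) + 1) * 2 ^ (-(k:ℤ)) - (a i : ℝ) * 2 ^ (-(k:ℤ))
      = ((2:ℝ) ^ k)⁻¹ := by
    intro i
    rw [zpow_neg, zpow_natCast]
    ring
  calc ∏ i : Fin d, ENNReal.ofReal (((a i : ℝ) + 1) * 2 ^ (-(k:ℤ)) - (a i : ℝ) * 2 ^ (-(k:ℤ)))
      = ∏ _i : Fin d, ((2:ℝ≥0∞)⁻¹) ^ k := by
        apply Finset.prod_congr rfl
        intro i _
        rw [hδ i, uval]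
  _ = uu d k := by
        rw [Finset.prod_const, Finset.card_univ, Fintype.card_fin, uu, ← pow_mul]

lemma uu_shift {d : ℕ} (k m : ℕ) : uu d k = ((2 ^ (m * d) : ℕ) : ℝ≥0∞) * uu d (k + m) := by
  rw [uu, uu, add_mul, pow_add]
  push_cast
  have hcan : (2:ℝ≥0∞) ^ (m * d) * (2⁻¹:ℝ≥0∞) ^ (m * d) = 1 := by
    rw [← mul_pow, ENNReal.mul_inv_cancel (by norm_num) (by norm_num), one_pow]
  calc (2⁻¹:ℝ≥0∞) ^ (k * d)
      = ((2:ℝ≥0∞) ^ (m * d) * (2⁻¹:ℝ≥0∞) ^ (m * d)) * (2⁻¹:ℝ≥0∞) ^ (k * d) := by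
        rw [hcan, one_mul]
  _ = (2:ℝ≥0∞) ^ (m * d) * ((2⁻¹:ℝ≥0∞) ^ (k * d) * (2⁻¹:ℝ≥0∞) ^ (m * d)) := by ring

set_option maxHeartbeats 1000000 in
lemma levelBound {d : ℕ} (hd : 1 ≤ d) {E : Set (EuclideanSpace ℝ (Fin d))}
    (hE : E ⊆ unitCube d) {ε : ℝ} (hε : 0 < ε) (hε1 : ε ≤ 1) {m : ℕ}
    (hm : ((2:ℝ) ^ m)⁻¹ ≤ 7 * ε / (8 * Real.sqrt d)) (k : ℕ) :
    (∑' a : Fin d → Fin (2 ^ k),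
        if (dyCube3 d k (fun i => (a i : ℕ)) ∩ E).Nonempty ∧
            ε ≤ sparse7 E k (fun i => (a i : ℕ))
          then volume (dyCube d k (fun i => (a i : ℕ)))
          else 0)
      ≤ ((7 ^ d * 2 ^ (m * d) : ℕ) : ℝ≥0∞) * ∑ _b ∈ HF d E (7 * 2 ^ m) (k + m), uu d (k + m) := by
  classical
  set cond : (Fin d → Fin (2 ^ k)) → Prop := fun a =>
    (dyCube3 d k (fun i => (a i : ℕ)) ∩ E).Nonempty ∧ ε ≤ sparse7 E k (fun i => (a i : ℕ))
    with hcond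
  set Asp : Finset (Fin d → Fin (2 ^ k)) := Finset.univ.filter cond with hAsp
  -- the sum equals card Asp * uu d k
  have hsum : (∑' a : Fin d → Fin (2 ^ k),
      if cond a then volume (dyCube d k (fun i => (a i : ℕ))) else 0)
      = (Asp.card : ℝ≥0∞) * uu d k := by
    rw [tsum_fintype]
    rw [← Finset.sum_filter]
    have : ∀ a ∈ Asp, volume (dyCube d k (fun i => (a i : ℕ))) = uu d k := by
      intro a _
      exact volume_dyCube d k _
    rw [Finset.sum_congr rfl this, Finset.sum_const, nsmul_eq_mul]
  rw [hsum]
  -- the hole map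
  set f : (Fin d → Fin (2 ^ k)) → (Fin d → ℤ) := fun a =>
    if h : cond a then Classical.choose (hole_of_sparse hd hε hε1 hm h.1 h.2)
    else fun _ => 0 with hfdef
  have hspec : ∀ a, cond a →
      (∀ i, (((a i : ℕ) : ℤ) - 3) * 2 ^ m ≤ f a i ∧ f a i < (((a i : ℕ) : ℤ) + 4) * 2 ^ m) ∧
      cube d (k + m) (f a) ∩ E = ∅ ∧
      (∃ e ∈ E, ∀ i, |(f a i : ℝ) * ((2:ℝ) ^ (k + m))⁻¹ - e i| ≤
        (7 * 2 ^ m) * ((2:ℝ) ^ (k + m))⁻¹) := by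
    intro a h
    rw [hfdef]
    simp only [dif_pos h]
    exact Classical.choose_spec (hole_of_sparse hd hε hε1 hm h.1 h.2)
  have himg : ∀ a ∈ Asp, f a ∈ HF d E (7 * 2 ^ m) (k + m) := by
    intro a ha
    have hc : cond a := (Finset.mem_filter.mp ha).2
    obtain ⟨-, hempty, e, heE, hnear⟩ := hspec a hc
    apply mem_HF_of_hole hE
    refine ⟨hempty, e, heE, ?_⟩
    intro i
    have := hnear i
    calc |(f a i : ℝ) * ((2:ℝ) ^ (k + m))⁻¹ - e i| ≤ (7 * 2 ^ m) * ((2:ℝ) ^ (k + m))⁻¹ := this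
    _ = ((7 * 2 ^ m : ℕ) : ℝ) * ((2:ℝ) ^ (k + m))⁻¹ := by push_cast; ring
  -- fibers have at most 7^d elements
  have hfiber : ∀ b ∈ Asp.image f, (Asp.filter (fun a => f a = b)).card ≤ 7 ^ d := by
    intro b _
    apply card_window (lo := fun i => b i / 2 ^ m - 3)
    intro a ha i
    obtain ⟨haAsp, hab⟩ := Finset.mem_filter.mp ha
    have hc : cond a := (Finset.mem_filter.mp haAsp).2
    obtain ⟨hwin, -, -⟩ := hspec a hc
    obtain ⟨hw1, hw2⟩ := hwin i
    rw [hab] at hw1 hw2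
    have h2m : (0:ℤ) < 2 ^ m := by positivity
    have hdiv1 : ((a i : ℕ) : ℤ) - 3 ≤ b i / 2 ^ m :=
      (Int.le_ediv_iff_mul_le h2m).mpr hw1
    have hdiv2 : b i / 2 ^ m < ((a i : ℕ) : ℤ) + 4 :=
      (Int.ediv_lt_iff_lt_mul h2m).mpr hw2
    constructor
    · omega
    · omega
  have hcard : Asp.card ≤ 7 ^ d * (HF d E (7 * 2 ^ m) (k + m)).card := by
    calc Asp.card ≤ 7 ^ d * (Asp.image f).card :=
          Finset.card_le_mul_card_image Asp (7 ^ d) hfiber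
    _ ≤ 7 ^ d * (HF d E (7 * 2 ^ m) (k + m)).card := by
        apply Nat.mul_le_mul_left
        apply Finset.card_le_card
        intro b hb
        obtain ⟨a, ha, rfl⟩ := Finset.mem_image.mp hb
        exact himg a ha
  calc (Asp.card : ℝ≥0∞) * uu d k
      ≤ ((7 ^ d * (HF d E (7 * 2 ^ m) (k + m)).card : ℕ) : ℝ≥0∞) * uu d k := by
        apply mul_le_mul_of_nonneg_right _ zero_le
        exact_mod_cast hcard
  _ = ((7 ^ d * 2 ^ (m * d) : ℕ) : ℝ≥0∞) *
        (((HF d E (7 * 2 ^ m) (k + m)).card : ℝ≥0∞) * uu d (k + m)) := by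
        rw [uu_shift k m]
        push_cast
        ring
  _ = ((7 ^ d * 2 ^ (m * d) : ℕ) : ℝ≥0∞) * ∑ _b ∈ HF d E (7 * 2 ^ m) (k + m), uu d (k + m) := by
        rw [Finset.sum_const, nsmul_eq_mul]


lemma mainBound {d : ℕ} (hd : 1 ≤ d) {E : Set (EuclideanSpace ℝ (Fin d))}
    (hE : E ⊆ unitCube d) {ε : ℝ} (hε : 0 < ε) (hε1 : ε ≤ 1) {m : ℕ}
    (hm : ((2:ℝ) ^ m)⁻¹ ≤ 7 * ε / (8 * Real.sqrt d)) :
    (∑' (k : ℕ) (a : Fin d → Fin (2 ^ k)),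
        if (dyCube3 d k (fun i => (a i : ℕ)) ∩ E).Nonempty ∧
            ε ≤ sparse7 E k (fun i => (a i : ℕ))
          then volume (dyCube d k (fun i => (a i : ℕ)))
          else 0)
      ≤ ((7 ^ d * 2 ^ (m * d) : ℕ) : ℝ≥0∞) *
        (((4 * d * (7 * 2 ^ m) : ℕ) : ℝ≥0∞) * ((2 * (7 * 2 ^ m) + 3 : ℕ) : ℝ≥0∞) ^ d) := by
  calc (∑' (k : ℕ) (a : Fin d → Fin (2 ^ k)),
        if (dyCube3 d k (fun i => (a i : ℕ)) ∩ E).Nonempty ∧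
            ε ≤ sparse7 E k (fun i => (a i : ℕ))
          then volume (dyCube d k (fun i => (a i : ℕ)))
          else 0)
      ≤ ∑' (k : ℕ), ((7 ^ d * 2 ^ (m * d) : ℕ) : ℝ≥0∞) *
          ∑ _b ∈ HF d E (7 * 2 ^ m) (k + m), uu d (k + m) :=
        ENNReal.tsum_le_tsum (fun k => levelBound hd hE hε hε1 hm k)
  _ = ((7 ^ d * 2 ^ (m * d) : ℕ) : ℝ≥0∞) *
        ∑' (k : ℕ), ∑ _b ∈ HF d E (7 * 2 ^ m) (k + m), uu d (k + m) :=
        ENNReal.tsum_mul_left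
  _ ≤ ((7 ^ d * 2 ^ (m * d) : ℕ) : ℝ≥0∞) *
        ∑' (j : ℕ), ∑ _b ∈ HF d E (7 * 2 ^ m) j, uu d j := by
        apply mul_le_mul_right
        exact ENNReal.tsum_comp_le_tsum_of_injective (add_left_injective m)
          (fun j => ∑ _b ∈ HF d E (7 * 2 ^ m) j, uu d j)
  _ ≤ ((7 ^ d * 2 ^ (m * d) : ℕ) : ℝ≥0∞) *
        (((4 * d * (7 * 2 ^ m) : ℕ) : ℝ≥0∞) * ((2 * (7 * 2 ^ m) + 3 : ℕ) : ℝ≥0∞) ^ d) :=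
        mul_le_mul_right (corePacking hd hE (7 * 2 ^ m)) _


end CPS

/-- **Carleson packing for sparse cubes.** For every `ε > 0` and `d` there is `K̃ > 0`,
depending only on `ε` and `d`, such that for every `E ⊆ [0,1]^d`, the sum of `λ(Q)` over
all dyadic cubes `Q ⊆ [0,1]^d` with `3Q ∩ E ≠ ∅` and `sparse(E,7Q) ≥ ε` is at most `K̃`. -/
theorem carleson_packing_sparse_cubes (d : ℕ) (ε : ℝ) (hε : 0 < ε) :
    ∃ K : ℝ, 0 < K ∧
      ∀ E : Set (EuclideanSpace ℝ (Fin d)), E ⊆ unitCube d →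
        (∑' (k : ℕ) (a : Fin d → Fin (2 ^ k)),
            if (dyCube3 d k (fun i => (a i : ℕ)) ∩ E).Nonempty ∧
                ε ≤ sparse7 E k (fun i => (a i : ℕ))
              then volume (dyCube d k (fun i => (a i : ℕ)))
              else 0) ≤ ENNReal.ofReal K := by
  rcases Nat.eq_zero_or_pos d with hd0 | hd
  · subst hd0
    refine ⟨1, one_pos, ?_⟩
    intro E hE
    have hzero : ∀ (k : ℕ) (a : Fin 0 → Fin (2 ^ k)),
        (if (dyCube3 0 k (fun i => (a i : ℕ)) ∩ E).Nonempty ∧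
            ε ≤ sparse7 E k (fun i => (a i : ℕ))
          then volume (dyCube 0 k (fun i => (a i : ℕ)))
          else 0) = 0 := by
      intro k a
      rw [if_neg]
      rintro ⟨⟨e, he3, heE⟩, hsp⟩
      have h7 : e ∈ dyCube7 0 k (fun i => (a i : ℕ)) := fun i => i.elim0
      have hall : ∀ x : EuclideanSpace ℝ (Fin 0), x = e := by
        intro x
        exact congrArg (WithLp.toLp 2) (funext fun i => i.elim0 : x.ofLp = e.ofLp)
      have hsupz : ∀ x : ↥(dyCube7 0 k (fun i => (a i : ℕ))),
          Metric.infDist (x : EuclideanSpace ℝ (Fin 0))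
            (dyCube7 0 k (fun i => (a i : ℕ)) ∩ E) = 0 := by
        intro x
        rw [hall (x : EuclideanSpace ℝ (Fin 0))]
        exact Metric.infDist_zero_of_mem ⟨h7, heE⟩
      have hne7 : Nonempty ↥(dyCube7 0 k (fun i => (a i : ℕ))) := ⟨⟨e, h7⟩⟩
      have hsup0 : (⨆ x : ↥(dyCube7 0 k (fun i => (a i : ℕ))),
          Metric.infDist (x : EuclideanSpace ℝ (Fin 0))
            (dyCube7 0 k (fun i => (a i : ℕ)) ∩ E)) = 0 := by
        rw [iSup_congr hsupz]
        exact ciSup_const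
      have hzero' : sparse7 E k (fun i => (a i : ℕ)) = 0 := by
        rw [sparse7, hsup0, zero_div]
      rw [hzero'] at hsp
      linarith
    have h1 : ∀ k : ℕ, (∑' a : Fin 0 → Fin (2 ^ k),
        if (dyCube3 0 k (fun i => (a i : ℕ)) ∩ E).Nonempty ∧
            ε ≤ sparse7 E k (fun i => (a i : ℕ))
          then volume (dyCube 0 k (fun i => (a i : ℕ)))
          else 0) = 0 := by
      intro k
      rw [tsum_congr (hzero k), tsum_zero]
    rw [tsum_congr h1, tsum_zero]
    exact zero_le
  · set ε' := min ε 1 with hε'def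
    have hε'0 : 0 < ε' := lt_min hε one_pos
    have hε'1 : ε' ≤ 1 := min_le_right _ _
    have hε'ε : ε' ≤ ε := min_le_left _ _
    obtain ⟨m, hm⟩ : ∃ m : ℕ, ((2:ℝ) ^ m)⁻¹ ≤ 7 * ε' / (8 * Real.sqrt d) := by
      have hsd : (0:ℝ) < Real.sqrt d := Real.sqrt_pos.mpr (by exact_mod_cast hd)
      have hpos : 0 < 7 * ε' / (8 * Real.sqrt d) := by positivity
      obtain ⟨n, hn⟩ := exists_pow_lt_of_lt_one hpos (by norm_num : (1:ℝ)/2 < 1)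
      refine ⟨n, ?_⟩
      have heq : ((1:ℝ)/2) ^ n = ((2:ℝ) ^ n)⁻¹ := by
        rw [div_pow, one_pow, one_div]
      rw [heq] at hn
      exact hn.le
    set N : ℕ := 7 ^ d * 2 ^ (m * d) * (4 * d * (7 * 2 ^ m) * (2 * (7 * 2 ^ m) + 3) ^ d)
      with hNdef
    refine ⟨(N : ℝ) + 1, by positivity, ?_⟩
    intro E hE
    have hmono : ∀ (k : ℕ) (a : Fin d → Fin (2 ^ k)),
        (if (dyCube3 d k (fun i => (a i : ℕ)) ∩ E).Nonempty ∧
            ε ≤ sparse7 E k (fun i => (a i : ℕ))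
          then volume (dyCube d k (fun i => (a i : ℕ))) else 0)
        ≤ (if (dyCube3 d k (fun i => (a i : ℕ)) ∩ E).Nonempty ∧
            ε' ≤ sparse7 E k (fun i => (a i : ℕ))
          then volume (dyCube d k (fun i => (a i : ℕ))) else 0) := by
      intro k a
      by_cases h : (dyCube3 d k (fun i => (a i : ℕ)) ∩ E).Nonempty ∧
          ε ≤ sparse7 E k (fun i => (a i : ℕ))
      · rw [if_pos h, if_pos ⟨h.1, le_trans hε'ε h.2⟩]
      · rw [if_neg h]
        exact zero_le
    calc (∑' (k : ℕ) (a : Fin d → Fin (2 ^ k)),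
          if (dyCube3 d k (fun i => (a i : ℕ)) ∩ E).Nonempty ∧
              ε ≤ sparse7 E k (fun i => (a i : ℕ))
            then volume (dyCube d k (fun i => (a i : ℕ)))
            else 0)
        ≤ (∑' (k : ℕ) (a : Fin d → Fin (2 ^ k)),
          if (dyCube3 d k (fun i => (a i : ℕ)) ∩ E).Nonempty ∧
              ε' ≤ sparse7 E k (fun i => (a i : ℕ))
            then volume (dyCube d k (fun i => (a i : ℕ)))
            else 0) :=
          ENNReal.tsum_le_tsum (fun k => ENNReal.tsum_le_tsum (hmono k))
    _ ≤ ((7 ^ d * 2 ^ (m * d) : ℕ) : ℝ≥0∞) *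
          (((4 * d * (7 * 2 ^ m) : ℕ) : ℝ≥0∞) * ((2 * (7 * 2 ^ m) + 3 : ℕ) : ℝ≥0∞) ^ d) :=
          CPS.mainBound hd hE hε'0 hε'1 hm
    _ ≤ ENNReal.ofReal ((N : ℝ) + 1) := by
          have h1 : ((7 ^ d * 2 ^ (m * d) : ℕ) : ℝ≥0∞) *
              (((4 * d * (7 * 2 ^ m) : ℕ) : ℝ≥0∞) * ((2 * (7 * 2 ^ m) + 3 : ℕ) : ℝ≥0∞) ^ d)
              = (N : ℝ≥0∞) := by
            rw [hNdef]
            push_cast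
            ring
          rw [h1]
          calc (N : ℝ≥0∞) = ENNReal.ofReal (N : ℝ) := (ENNReal.ofReal_natCast N).symm
          _ ≤ ENNReal.ofReal ((N : ℝ) + 1) := ENNReal.ofReal_le_ofReal (by linarith)
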